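/- arXiv:1512.02791 — 5 statements merged into one kernel-verified Lean document; each statement's English description precedes it below -/
import Mathlib

section
/- For every symmetric polynomial P in n variables over a commutative ring R, there exists a polynomial T in n variables over R such that P equals T composed with the elementary symmetric polynomials σ_{n,1}, ..., σ_{n,n}. -/
theorem fundamental_theorem_symmetric_polynomials
    (R : Type*) [CommRing R] (n : ℕ) (P : MvPolynomial (Fin n) R)
    (hP : P.IsSymmetric) :
    ∃ T : MvPolynomial (Fin n) R,
      P = MvPolynomial.bind₁
        (fun i : Fin n => MvPolynomial.esymm (Fin n) R (i.1 + 1)) T := by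
  obtain ⟨T, hT⟩ := MvPolynomial.esymmAlgHom_surjective (σ := Fin n) (R := R) (n := n)
    (by simp) ⟨P, hP⟩
  refine ⟨T, ?_⟩
  have := congrArg Subtype.val hT
  rw [MvPolynomial.esymmAlgHom_apply] at this
  rw [MvPolynomial.bind₁]
  exact this.symm
end

section
/- In the fundamental theorem of symmetric polynomials, the decomposition polynomial T can be chosen so that its weight is at most the total degree of P, where the weight of a monomial X_1^{k_1}···X_n^{k_n} is defined as Σ_{i=1}^n i·k_i and the weight of a polynomial is the maximum weight of its monomials. -/
/-- The weight of a multivariate polynomial: the maximum over its monomials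
`X_1^{k_1} ⋯ X_n^{k_n}` of `∑ i, i * k_i` (variables counted from 1). -/
def mweight {R : Type*} [CommRing R] {n : ℕ} (q : MvPolynomial (Fin n) R) : ℕ :=
  q.support.sup (fun m => ∑ i : Fin n, (i.1 + 1) * m i)

open MvPolynomial Finset AddMonoidAlgebra

lemma totalDegree_esymm_le (n k : ℕ) (R : Type*) [CommRing R] :
    (esymm (Fin n) R k).totalDegree ≤ k := by
  rw [esymm]
  refine (totalDegree_finset_sum _ _).trans ?_
  refine Finset.sup_le fun s hs => ?_
  refine (totalDegree_finset_prod _ _).trans ?_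
  have hx : ∀ i : Fin n, (X i : MvPolynomial (Fin n) R).totalDegree ≤ 1 := fun i =>
    (totalDegree_monomial_le _ _).trans (by simp)
  refine (Finset.sum_le_card_nsmul _ _ 1 fun i _ => hx i).trans ?_
  simp [(Finset.mem_powersetCard.1 hs).2]

lemma sum_accumulate {n : ℕ} (f : Fin n → ℕ) :
    ∑ j : Fin n, Fin.accumulate n n f j = ∑ i : Fin n, (i.1 + 1) * f i := by
  simp_rw [Fin.accumulate_apply, Finset.sum_filter]
  rw [Finset.sum_comm]
  refine Finset.sum_congr rfl fun i _ => ?_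
  have : ∀ j : Fin n, (if j.1 ≤ i.1 then f i else 0) = if j ∈ Finset.Iic i then f i else 0 := by
    intro j; simp only [Finset.mem_Iic, Fin.le_def]
  simp_rw [this, ← Finset.sum_filter, Finset.filter_mem_eq_inter, Finset.univ_inter,
    Finset.sum_const, Fin.card_Iic, smul_eq_mul]

lemma mweight_add_le {n : ℕ} {R : Type*} [CommRing R] (p q : MvPolynomial (Fin n) R) :
    mweight (p + q) ≤ max (mweight p) (mweight q) := by
  classical
  unfold mweight
  refine Finset.sup_le fun m hm => ?_
  rcases Finset.mem_union.1 (MvPolynomial.support_add hm) with h | h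
  · exact le_max_of_le_left (Finset.le_sup (f := fun m => ∑ i : Fin n, (i.1 + 1) * m i) h)
  · exact le_max_of_le_right (Finset.le_sup (f := fun m => ∑ i : Fin n, (i.1 + 1) * m i) h)

lemma totalDegree_esymmAlgHomMonomial_le {n : ℕ} {R : Type*} [CommRing R]
    (t : Fin n →₀ ℕ) (r : R) :
    (esymmAlgHomMonomial (Fin n) t r).totalDegree ≤ ∑ i : Fin n, (i.1 + 1) * t i := by
  induction t using Finsupp.induction₂ with
  | zero => simp [esymmAlgHom_zero]
  | add_single i k t _ _ ih =>
    rw [esymmAlgHomMonomial_add, esymmAlgHomMonomial_single_one]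
    refine (totalDegree_mul _ _).trans ?_
    have h1 : ((esymm (Fin n) R (i + 1)) ^ k).totalDegree ≤ k * (i.1 + 1) :=
      (totalDegree_pow _ _).trans (Nat.mul_le_mul_left _ (totalDegree_esymm_le _ _ _))
    have h2 : ∑ j : Fin n, (j.1 + 1) * (t + Finsupp.single i k) j
        = (∑ j : Fin n, (j.1 + 1) * t j) + (i.1 + 1) * k := by
      simp_rw [Finsupp.add_apply, mul_add, Finset.sum_add_distrib]
      congr 1
      simp [Finsupp.single_apply, mul_ite, Finset.sum_ite_eq', mul_comm]
    rw [h2]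
    exact add_le_add ih (h1.trans_eq (mul_comm _ _))

theorem fundamental_theorem_symmetric_polynomials_weight
    (R : Type*) [CommRing R] (n : ℕ) (P : MvPolynomial (Fin n) R)
    (hP : P.IsSymmetric) :
    ∃ T : MvPolynomial (Fin n) R,
      P = MvPolynomial.bind₁
        (fun i : Fin n => MvPolynomial.esymm (Fin n) R (i.1 + 1)) T ∧
      mweight T ≤ P.totalDegree := by
  have key : ∀ T : MvPolynomial (Fin n) R,
      MvPolynomial.bind₁ (fun i : Fin n => MvPolynomial.esymm (Fin n) R (i.1 + 1)) T
        = esymmAlgHomMonomial (Fin n) (0 : Fin n →₀ ℕ) 1 * aeval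
          (fun i : Fin n => esymm (Fin n) R (i + 1)) T := by
    intro T
    rw [esymmAlgHom_zero, map_one, one_mul, bind₁]
  suffices h : ∀ p : MvPolynomial (Fin n) R, p.IsSymmetric →
      ∃ T : MvPolynomial (Fin n) R,
        p = aeval (fun i : Fin n => esymm (Fin n) R (i + 1)) T ∧
        mweight T ≤ p.totalDegree by
    obtain ⟨T, hT, hw⟩ := h P hP
    exact ⟨T, by rw [key, esymmAlgHom_zero, map_one, one_mul, hT], hw⟩
  intro p
  induction' he : p.supDegree toLex using WellFoundedLT.induction with d ih generalizing p
  subst he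
  intro hp
  obtain rfl | h0 := eq_or_ne p 0
  · exact ⟨0, by simp, by simp [mweight]⟩
  set t : Fin n →₀ ℕ :=
    Finsupp.equivFunOnFinite.symm (Fin.invAccumulate n n ↑(ofLex <| p.supDegree toLex)) with htdef
  set r : R := p.leadingCoeff toLex with hrdef
  have hr : r ≠ 0 := by rwa [hrdef, Ne, leadingCoeff_eq_zero toLex.injective]
  have hacc : Fin.accumulate n n ⇑t = ⇑(ofLex <| p.supDegree toLex) := by
    rw [htdef]
    exact Fin.accumulate_invAccumulate le_rfl hp.antitone_supDegree
  -- weight of t is at most totalDegree p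
  have hW : ∑ i : Fin n, (i.1 + 1) * t i ≤ p.totalDegree := by
    rw [← sum_accumulate, hacc]
    have hmem : ofLex (p.supDegree toLex) ∈ p.support := by
      rw [MvPolynomial.mem_support_iff, ← leadingCoeff_toLex]
      exact hr
    calc ∑ j : Fin n, (ofLex (p.supDegree toLex)) j
        = (ofLex (p.supDegree toLex)).sum fun _ e => e := by
          rw [Finsupp.sum_fintype]; intro; rfl
      _ ≤ p.totalDegree := le_totalDegree hmem
  have hMdeg : (esymmAlgHomMonomial (Fin n) t r).totalDegree ≤ p.totalDegree :=
    (totalDegree_esymmAlgHomMonomial_le t r).trans hW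
  have hd : (esymmAlgHomMonomial (Fin n) t r).supDegree toLex = p.supDegree toLex := by
    rw [← ofLex_inj, DFunLike.ext'_iff, supDegree_esymmAlgHomMonomial hr _ le_rfl, hacc]
  have hM : esymmAlgHomMonomial (Fin n) t r
      = aeval (fun i : Fin n => esymm (Fin n) R (i + 1)) (MvPolynomial.monomial t r) := by
    rw [esymmAlgHomMonomial, esymmAlgHom_apply]
  have hmw : mweight (MvPolynomial.monomial t r) ≤ p.totalDegree := by
    refine Finset.sup_le fun m hm => ?_
    have := MvPolynomial.support_monomial_subset hm
    rw [Finset.mem_singleton] at this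
    subst this
    exact hW
  obtain heq | hne := eq_or_ne p (esymmAlgHomMonomial (Fin n) t r)
  · exact ⟨MvPolynomial.monomial t r, by rw [heq, hM], hmw⟩
  have hlt := (supDegree_sub_lt_of_leadingCoeff_eq toLex.injective hd.symm
    (leadingCoeff_esymmAlgHomMonomial t le_rfl).symm).resolve_right hne
  have hsym : (p - esymmAlgHomMonomial (Fin n) t r).IsSymmetric :=
    hp.sub (isSymmetric_esymmAlgHomMonomial t r)
  obtain ⟨T', hT', hw'⟩ := ih _ hlt _ rfl hsym
  refine ⟨T' + MvPolynomial.monomial t r, ?_, ?_⟩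
  · rw [map_add, ← hT', ← hM]; ring
  · have hdeg' : (p - esymmAlgHomMonomial (Fin n) t r).totalDegree ≤ p.totalDegree := by
      rw [sub_eq_add_neg]
      refine (totalDegree_add _ _).trans ?_
      rw [totalDegree_neg]
      exact max_le le_rfl hMdeg
    exact (mweight_add_le _ _).trans (max_le (hw'.trans hdeg') hmw)
end

section
/- Let T be a polynomial with integer coefficients, p ≥ 1, and F_p = X^{p-1} · T^p. Then every coefficient of the polynomial Σ_{i=p}^{deg F_p} F_p^{(i)} is divisible by p!. -/
theorem derive_n_p_multiple_fact_p (T : Polynomial ℤ) (p : ℕ) (hp : 1 ≤ p) :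
    let Fp : Polynomial ℤ := Polynomial.X ^ (p - 1) * T ^ p
    ∀ k : ℕ, (p.factorial : ℤ) ∣
      (∑ i ∈ Finset.Icc p Fp.natDegree, (Polynomial.derivative)^[i] Fp).coeff k := by
  intro Fp k
  rw [Polynomial.finset_sum_coeff]
  apply Finset.dvd_sum
  intro i hi
  rw [Polynomial.coeff_iterate_derivative, nsmul_eq_mul]
  exact Dvd.dvd.mul_right
    (Int.natCast_dvd_natCast.2 ((Nat.factorial_dvd_factorial (Finset.mem_Icc.1 hi).1).trans
      (Nat.factorial_dvd_descFactorial _ _))) _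
end

section
/- For every polynomial P over ℂ and every complex number α, the integral from 0 to 1 of α·e^{-αx}·P(αx) dx equals P_d(0) − e^{-α}·P_d(α), where P_d is the sum of all derivatives of P. -/
theorem I_identity (P : Polynomial ℂ) (α : ℂ) :
    let Pd : Polynomial ℂ :=
      ∑ i ∈ Finset.range (P.natDegree + 1), (Polynomial.derivative)^[i] P
    (∫ x in (0:ℝ)..1, α * Complex.exp (-α * x) * P.eval (α * x)) =
      Pd.eval 0 - Complex.exp (-α) * Pd.eval α := by
  intro Pd
  have hkey : Pd - Polynomial.derivative Pd = P := by
    have hder : Polynomial.derivative Pd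
        = ∑ i ∈ Finset.range (P.natDegree + 1), (Polynomial.derivative)^[i+1] P := by
      simp only [Pd, map_sum]
      exact Finset.sum_congr rfl fun i _ => (Function.iterate_succ_apply' _ _ _).symm
    rw [hder, ← Finset.sum_sub_distrib, Finset.sum_range_sub' (fun i => (Polynomial.derivative)^[i] P)]
    simp [Polynomial.iterate_derivative_eq_zero (Nat.lt_succ_self _)]
  -- the antiderivative
  set f : ℝ → ℂ := fun x => -(Complex.exp (-α * x) * Pd.eval (α * x)) with hf
  have hderiv : ∀ x : ℝ, HasDerivAt f (α * Complex.exp (-α * x) * P.eval (α * x)) x := by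
    intro x
    have hG : ∀ z : ℂ, HasDerivAt (fun z : ℂ => -(Complex.exp (-α * z) * Pd.eval (α * z)))
        (α * Complex.exp (-α * z) * P.eval (α * z)) z := by
      intro z
      have h1 : HasDerivAt (fun z : ℂ => Complex.exp (-α * z))
          (Complex.exp (-α * z) * (-α)) z := by
        simpa [mul_comm] using (((hasDerivAt_id z).const_mul (-α)).cexp)
      have h2 : HasDerivAt (fun z : ℂ => Pd.eval (α * z))
          ((Pd.derivative.eval (α * z)) * α) z := by
        have := (Pd.hasDerivAt (α * z)).comp z (((hasDerivAt_id z).const_mul α))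
        simpa [Function.comp_def, mul_comm] using this
      have := ((h1.mul h2).neg)
      refine this.congr_deriv ?_
      have : P.eval (α * z) = Pd.eval (α * z) - Pd.derivative.eval (α * z) := by
        rw [← hkey]; simp
      rw [this]; ring
    exact (hG x).comp_ofReal
  have hcont : Continuous fun x : ℝ => α * Complex.exp (-α * x) * P.eval (α * x) := by
    fun_prop
  have := intervalIntegral.integral_eq_sub_of_hasDerivAt
    (fun x _ => hderiv x) (hcont.intervalIntegrable 0 1)
  rw [this]
  simp [f]
  ring
end

section
/- The real number e (the base of the natural exponential) is transcendental: it is not a root of any nonzero polynomial with rational coefficients. -/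
open Polynomial Finset
open scoped Nat

private lemma hermite_integral (f : ℝ[X]) (t : ℝ) :
    Real.exp t * (sumIDeriv f).eval 0 - (sumIDeriv f).eval t
      = ∫ u in (0:ℝ)..t, Real.exp (t - u) * f.eval u := by
  have hev : ∀ u : ℝ, (sumIDeriv f).eval u - (derivative (sumIDeriv f)).eval u = f.eval u := by
    intro u
    conv_lhs => rw [← sumIDeriv_derivative, sumIDeriv_eq_self_add f]
    simp [sumIDeriv_derivative]
  have hd : ∀ u ∈ Set.uIcc (0:ℝ) t,
      HasDerivAt (fun x => -(Real.exp (t - x) * (sumIDeriv f).eval x))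
        (Real.exp (t - u) * f.eval u) u := by
    intro u _
    have h1 : HasDerivAt (fun x : ℝ => Real.exp (t - x)) (-Real.exp (t - u)) u := by
      have := (Real.hasDerivAt_exp (t - u)).comp u ((hasDerivAt_id u).const_sub t)
      exact this.congr_deriv (by simp)
    have h2 : HasDerivAt (fun x : ℝ => (sumIDeriv f).eval x)
        ((derivative (sumIDeriv f)).eval u) u := (sumIDeriv f).hasDerivAt u
    have h3 := (h1.mul h2).neg
    exact h3.congr_deriv (by rw [← hev u]; ring)
  have hint : IntervalIntegrable (fun u => Real.exp (t - u) * f.eval u)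
      MeasureTheory.volume 0 t :=
    ((Real.continuous_exp.comp (continuous_const.sub continuous_id)).mul
      f.continuous).intervalIntegrable _ _
  rw [intervalIntegral.integral_eq_sub_of_hasDerivAt hd hint]
  simp [Real.exp_zero]
  ring

private lemma hermite_bound (f : ℝ[X]) (t c M : ℝ) (ht0 : 0 ≤ t) (htc : t ≤ c) (hM : 0 ≤ M)
    (hf : ∀ u ∈ Set.Icc (0:ℝ) c, |f.eval u| ≤ M) :
    |∫ u in (0:ℝ)..t, Real.exp (t - u) * f.eval u| ≤ c * Real.exp c * M := by
  have key : ∀ u ∈ Set.uIoc (0:ℝ) t, ‖Real.exp (t - u) * f.eval u‖ ≤ Real.exp c * M := by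
    intro u hu
    rw [Set.uIoc_of_le ht0] at hu
    rw [norm_mul, Real.norm_eq_abs, Real.norm_eq_abs, abs_of_pos (Real.exp_pos _)]
    have h1 : Real.exp (t - u) ≤ Real.exp c :=
      Real.exp_le_exp.2 (by linarith [hu.1, hu.2])
    exact mul_le_mul h1 (hf u ⟨hu.1.le, hu.2.trans htc⟩) (abs_nonneg _) (Real.exp_pos _).le
  have h2 := intervalIntegral.norm_integral_le_of_norm_le_const key
  rw [Real.norm_eq_abs] at h2
  calc |∫ u in (0:ℝ)..t, Real.exp (t - u) * f.eval u| ≤ Real.exp c * M * |t - 0| := h2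
    _ ≤ Real.exp c * M * c := by
        rw [sub_zero, abs_of_nonneg ht0]
        exact mul_le_mul_of_nonneg_left htc (by positivity)
    _ = c * Real.exp c * M := by ring

private lemma exists_int_poly {x : ℝ} (hx : x ≠ 0) (h : IsAlgebraic ℤ x) :
    ∃ g : ℤ[X], g.coeff 0 ≠ 0 ∧ Polynomial.aeval x g = 0 := by
  obtain ⟨g, hg0, hge⟩ := h
  have key : ∀ m (g : ℤ[X]), g ≠ 0 → Polynomial.aeval x g = 0 → g.natDegree ≤ m →
      ∃ g' : ℤ[X], g'.coeff 0 ≠ 0 ∧ Polynomial.aeval x g' = 0 := by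
    intro m
    induction m with
    | zero =>
      intro g hg0 hge hd
      by_cases h0 : g.coeff 0 ≠ 0
      · exact ⟨g, h0, hge⟩
      · push_neg at h0
        obtain ⟨g1, rfl⟩ := (Polynomial.X_dvd_iff).2 h0
        have hg1 : g1 ≠ 0 := by rintro rfl; simp at hg0
        rw [natDegree_X_mul hg1] at hd
        omega
    | succ m ih =>
      intro g hg0 hge hd
      by_cases h0 : g.coeff 0 ≠ 0
      · exact ⟨g, h0, hge⟩
      · push_neg at h0
        obtain ⟨g1, rfl⟩ := (Polynomial.X_dvd_iff).2 h0
        have hg1 : g1 ≠ 0 := by rintro rfl; simp at hg0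
        have hge1 : Polynomial.aeval x g1 = 0 := by
          rw [map_mul, aeval_X, mul_eq_zero] at hge
          exact hge.resolve_left hx
        rw [natDegree_X_mul hg1] at hd
        exact ih g1 hg1 hge1 (by omega)
  exact key g.natDegree g hg0 hge le_rfl

set_option maxHeartbeats 1000000 in
theorem e_transcendental : Transcendental ℚ (Real.exp 1) := by
  intro halgQ
  have halg : IsAlgebraic ℤ (Real.exp 1) :=
    (IsFractionRing.isAlgebraic_iff ℤ ℚ ℝ).mpr halgQ
  obtain ⟨g, ha0, hge⟩ := exists_int_poly (Real.exp_ne_zero 1) halg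
  set n := g.natDegree with hn
  have hsum : ∑ i ∈ range (n + 1), (g.coeff i : ℝ) * Real.exp 1 ^ i = 0 := by
    rw [← hge, aeval_eq_sum_range]
    simp [zsmul_eq_mul, ← hn]
  set B : ℝ := ((n : ℝ) + 1) ^ (n + 1) with hB
  have hB1 : (1:ℝ) ≤ (n:ℝ) + 1 := by have := Nat.cast_nonneg (α := ℝ) n; linarith
  have hBpos : 0 ≤ B := by positivity
  set A : ℝ := (∑ i ∈ range (n + 1), |(g.coeff i : ℝ)|) * ((n : ℝ) * Real.exp n) with hA
  obtain ⟨p, hpgt, hpp, hplt⟩ : ∃ p : ℕ, max n (g.coeff 0).natAbs < p ∧ p.Prime ∧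
      A * B ^ p < ((p - 1)! : ℝ) := by
    have hev := (FloorSemiring.eventually_mul_pow_lt_factorial_sub A B 1).and
      (Filter.eventually_gt_atTop (max n (g.coeff 0).natAbs))
    obtain ⟨M, hM⟩ := Filter.eventually_atTop.1 hev
    obtain ⟨p, hpM, hpp⟩ := Nat.exists_infinite_primes M
    exact ⟨p, (hM p hpM).2, hpp, (hM p hpM).1⟩
  have hpn : n < p := lt_of_le_of_lt (le_max_left _ _) hpgt
  have hpa : (g.coeff 0).natAbs < p := lt_of_le_of_lt (le_max_right _ _) hpgt
  have hp1 : 1 ≤ p := hpp.one_lt.le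
  set f : ℤ[X] := X ^ (p - 1) * ∏ i ∈ range n, (X - C ((i : ℤ) + 1)) ^ p with hf
  set N : ℤ := ∑ i ∈ range (n + 1), g.coeff i * aeval ((i : ℤ)) (sumIDeriv f) with hN
  have hmap : f.map (algebraMap ℤ ℤ) = f := by
    rw [Algebra.algebraMap_self, Polynomial.map_id]
  have hinj : Function.Injective (algebraMap ℤ ℤ) := fun a b h => by simpa using h
  set E : ℤ := ∏ i ∈ range n, (0 - ((i : ℤ) + 1)) ^ p with hE
  -- value at 0
  obtain ⟨gp0, -, h0⟩ := aeval_sumIDeriv_of_pos (A := ℤ) f hpp.pos hinj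
  have hfac0 : f.map (algebraMap ℤ ℤ)
      = (X - C (0:ℤ)) ^ (p - 1) * (∏ i ∈ range n, (X - C ((i : ℤ) + 1)) ^ p) := by
    rw [hmap, hf, map_zero, sub_zero]
  have h00 : aeval (0:ℤ) (sumIDeriv f) = ((p-1)! : ℤ) * E + (p ! : ℤ) * aeval 0 gp0 := by
    have := h0 (0:ℤ) hfac0
    rw [this, hE]
    simp [Polynomial.eval_prod, nsmul_eq_mul]
  -- values at i+1
  obtain ⟨gp, -, hgp⟩ := aeval_sumIDeriv (A := ℤ) f p
  have hsucc : ∀ i ∈ range n,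
      aeval ((i : ℤ) + 1) (sumIDeriv f) = (p ! : ℤ) * aeval ((i : ℤ) + 1) gp := by
    intro i hi
    have hfaci : f.map (algebraMap ℤ ℤ) = (X - C ((i : ℤ) + 1)) ^ p
        * (X ^ (p - 1) * ∏ j ∈ (range n).erase i, (X - C ((j : ℤ) + 1)) ^ p) := by
      rw [hmap, hf, ← Finset.mul_prod_erase _ _ hi]
      ring
    rw [hgp ((i : ℤ) + 1) (Dvd.intro _ hfaci.symm), nsmul_eq_mul]
  -- integrality
  set K : ℤ := g.coeff 0 * aeval 0 gp0 + ∑ i ∈ range n, g.coeff (i+1) * aeval ((i : ℤ) + 1) gp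
    with hK
  have hfact : (p ! : ℤ) = p * ((p-1)! : ℤ) := by
    exact_mod_cast (Nat.mul_factorial_pred hpp.ne_zero).symm
  have hNfac : N = ((p-1)! : ℤ) * (g.coeff 0 * E + p * K) := by
    rw [hN, Finset.sum_range_succ']
    push_cast
    rw [h00]
    rw [Finset.sum_congr rfl (fun i hi => by rw [hsucc i hi])]
    rw [hK, hfact]
    simp only [Finset.mul_sum, mul_add, add_mul]
    have hflip : ∀ x ∈ range n, g.coeff (x + 1) * ((p:ℤ) * ((p-1)! : ℤ) * aeval ((x:ℤ) + 1) gp)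
        = ((p-1)! : ℤ) * ((p:ℤ) * (g.coeff (x + 1) * aeval ((x:ℤ) + 1) gp)) := fun x _ => by ring
    rw [Finset.sum_congr rfl hflip]
    ring
  have hprime : Prime (p:ℤ) := Nat.prime_iff_prime_int.mp hpp
  have hpE : ¬ (p:ℤ) ∣ E := by
    intro h
    rw [hE] at h
    obtain ⟨i, hi, hdvd⟩ := hprime.exists_mem_finset_dvd h
    have h2 : (p:ℤ) ∣ ((i:ℤ) + 1) := by
      have h2' := hprime.dvd_of_dvd_pow hdvd
      rwa [show (0 - ((i:ℤ)+1)) = -((i:ℤ)+1) by ring, dvd_neg] at h2'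
    have h3 : p ∣ (i + 1) := by exact_mod_cast h2
    have h4 := Nat.le_of_dvd (Nat.succ_pos i) h3
    have h5 : i + 1 ≤ n := Finset.mem_range.mp hi
    omega
  have hpa0 : ¬ (p:ℤ) ∣ g.coeff 0 := by
    intro h
    have h2 : p ∣ (g.coeff 0).natAbs := Int.natCast_dvd_natCast.mp (by
      rwa [Int.natCast_natAbs, dvd_abs])
    have := Nat.le_of_dvd (Int.natAbs_pos.mpr ha0) h2
    omega
  have hne : g.coeff 0 * E + p * K ≠ 0 := by
    intro h
    have hdvd : (p:ℤ) ∣ g.coeff 0 * E := ⟨-K, by linarith⟩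
    rcases hprime.dvd_mul.mp hdvd with h' | h'
    · exact hpa0 h'
    · exact hpE h'
  have hNge : ((p - 1)! : ℤ) ≤ |N| := by
    rw [hNfac, abs_mul]
    have h1 : |((p-1)! : ℤ)| = ((p-1)! : ℤ) := abs_of_nonneg (by positivity)
    rw [h1]
    have h2 : (1:ℤ) ≤ |g.coeff 0 * E + p * K| := Int.one_le_abs (by exact hne)
    nlinarith [abs_nonneg (g.coeff 0 * E + p * K), Int.natCast_pos.mpr (Nat.factorial_pos (p-1))]
  -- analytic side
  set fR : ℝ[X] := f.map (algebraMap ℤ ℝ) with hfR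
  have hcast : ∀ i : ℕ, ((aeval ((i:ℤ)) (sumIDeriv f) : ℤ) : ℝ)
      = (sumIDeriv fR).eval (i:ℝ) := by
    intro i
    rw [hfR, sumIDeriv_map]
    have h := eval_intCast_map (algebraMap ℤ ℝ) (sumIDeriv f) (i:ℤ)
    simp only [Int.cast_natCast] at h
    rw [h]
    simp [aeval_def, eval₂_eq_eval_map, Algebra.algebraMap_self, Polynomial.map_id]
  have hNR : (N : ℝ) = ∑ i ∈ range (n+1), (g.coeff i : ℝ) * (sumIDeriv fR).eval (i:ℝ) := by
    rw [hN]
    push_cast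
    exact Finset.sum_congr rfl fun i _ => by rw [hcast i]
  have hexp : ∀ i : ℕ, Real.exp (i:ℝ) = Real.exp 1 ^ i := fun i => by
    rw [← Real.exp_nat_mul, mul_one]
  have hJ : -(N:ℝ) = ∑ i ∈ range (n+1), (g.coeff i : ℝ) *
      ∫ u in (0:ℝ)..(i:ℝ), Real.exp ((i:ℝ) - u) * fR.eval u := by
    have expand : ∑ i ∈ range (n+1), (g.coeff i : ℝ) *
        (Real.exp (i:ℝ) * (sumIDeriv fR).eval 0 - (sumIDeriv fR).eval (i:ℝ))
        = (∑ i ∈ range (n+1), (g.coeff i : ℝ) * Real.exp 1 ^ i) * (sumIDeriv fR).eval 0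
          - ∑ i ∈ range (n+1), (g.coeff i : ℝ) * (sumIDeriv fR).eval (i:ℝ) := by
      rw [Finset.sum_mul, ← Finset.sum_sub_distrib]
      exact Finset.sum_congr rfl fun i _ => by rw [hexp i]; ring
    calc -(N:ℝ) = ∑ i ∈ range (n+1), (g.coeff i : ℝ) *
        (Real.exp (i:ℝ) * (sumIDeriv fR).eval 0 - (sumIDeriv fR).eval (i:ℝ)) := by
          rw [expand, hsum, hNR]; ring
      _ = _ := Finset.sum_congr rfl fun i _ => by rw [hermite_integral fR (i:ℝ)]
  -- bound on fR
  have hfRbound : ∀ u ∈ Set.Icc (0:ℝ) (n:ℝ), |fR.eval u| ≤ B ^ p := by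
    intro u hu
    have heval : fR.eval u = u ^ (p-1) * ∏ i ∈ range n, (u - ((i:ℝ) + 1)) ^ p := by
      rw [hfR, hf]
      simp only [Polynomial.map_mul, Polynomial.map_pow, Polynomial.map_prod,
        Polynomial.map_sub, Polynomial.map_X, map_C, eval_mul, eval_pow, eval_prod,
        eval_sub, eval_X, eval_C, algebraMap_int_eq, eq_intCast, Polynomial.map_add,
        Polynomial.map_one, Polynomial.map_natCast, eval_add, eval_one, eval_natCast]
      simp
    rw [heval, abs_mul, abs_pow, Finset.abs_prod]
    simp only [abs_pow]
    have hu0 := hu.1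
    have hun := hu.2
    calc |u| ^ (p-1) * ∏ i ∈ range n, |(u - ((i:ℝ) + 1))| ^ p
        ≤ ((n:ℝ)+1) ^ (p-1) * ∏ i ∈ range n, ((n:ℝ)+1) ^ p := by
          apply mul_le_mul
          · apply pow_le_pow_left₀ (abs_nonneg u) _
            rw [abs_of_nonneg hu0]; linarith
          · apply Finset.prod_le_prod (fun i _ => by positivity)
            intro i hi
            apply pow_le_pow_left₀ (abs_nonneg _)
            have hi' : (i:ℝ) + 1 ≤ (n:ℝ) := by
              have := Finset.mem_range.mp hi
              exact_mod_cast Nat.succ_le_of_lt this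
            rw [abs_le]
            constructor <;> linarith
          · positivity
          · positivity
      _ = ((n:ℝ)+1) ^ ((p-1) + p * n) := by
          rw [Finset.prod_const, Finset.card_range, ← pow_mul, ← pow_add]
      _ ≤ ((n:ℝ)+1) ^ ((n+1) * p) := by
          apply pow_le_pow_right₀ hB1
          have h1 : p - 1 ≤ p := Nat.sub_le p 1
          calc (p-1) + p * n ≤ p + p * n := by omega
            _ = (n+1) * p := by ring
      _ = B ^ p := by rw [hB, ← pow_mul]
  -- final bound
  have habs : |(N:ℝ)| ≤ A * B ^ p := by
    have h1 : |(N:ℝ)| = |-(N:ℝ)| := (abs_neg _).symm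
    rw [h1, hJ]
    calc |∑ i ∈ range (n+1), (g.coeff i : ℝ) *
        ∫ u in (0:ℝ)..(i:ℝ), Real.exp ((i:ℝ) - u) * fR.eval u|
        ≤ ∑ i ∈ range (n+1), |(g.coeff i : ℝ) *
          ∫ u in (0:ℝ)..(i:ℝ), Real.exp ((i:ℝ) - u) * fR.eval u| :=
          Finset.abs_sum_le_sum_abs _ _
      _ ≤ ∑ i ∈ range (n+1), |(g.coeff i : ℝ)| * ((n:ℝ) * Real.exp (n:ℝ) * B ^ p) := by
          apply Finset.sum_le_sum
          intro i hi
          rw [abs_mul]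
          apply mul_le_mul_of_nonneg_left _ (abs_nonneg _)
          exact hermite_bound fR (i:ℝ) (n:ℝ) (B ^ p) (by positivity)
            (by exact_mod_cast Nat.lt_succ_iff.mp (Finset.mem_range.mp hi))
            (by positivity) hfRbound
      _ = A * B ^ p := by rw [hA, ← Finset.sum_mul]; ring
  have hfin : ((p - 1)! : ℝ) ≤ |(N:ℝ)| := by
    rw [← Int.cast_abs]
    exact_mod_cast hNge
  linarith
end
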